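/- Let p be an odd prime, k ≥ 2, m = p^k, and let a be an integer with 1 ≤ a ≤ m − 1 and p | a; write a' = a/p. Let T = {a' + j·p^{k−1} : 0 ≤ j ≤ p − 1}, a set of p integers contained in {1, …, m − 1}, and let B, C be any partition of T with #B = (p−1)/2 and #C = (p+1)/2. Then the complex number Γ(f_a) = Γ(a/m)²·Γ([−2a]/m) · ∏_{b ∈ B} Γ((m−b)/m)²·Γ([2b]/m) / ∏_{c ∈ C} Γ(c/m)²·Γ([−2c]/m) belongs to ℚ(ζ_m)^×·π^ℤ; that is, there exist an integer N and a nonzero element w of the subfield ℚ(ζ_m) of ℂ such that Γ(f_a) = w·π^N. (Since √((−1)^{(p−1)/2}·p) lies in ℚ(ζ_p) ⊆ ℚ(ζ_m), this is the congruence Γ(f_a) ≡ √((−1)^{(p−1)/2}·p) modulo ℚ(ζ_m)^×·⟨π⟩ established in the proof of Theorem 7.2.12.) -/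

import Mathlib

/-- For `x : ℤ` not divisible by `m`, `repZ m x ∈ {1, …, m-1}` is the representative of
`x` modulo `m` (in general it is the representative in `{0, …, m-1}`). -/
def repZ (m : ℕ) (x : ℤ) : ℕ := (x % (m : ℤ)).toNat

open Real Set


private lemma convexOn_finsum {ι : Type*} (t : Finset ι) {s : Set ℝ} (hs : Convex ℝ s)
    (f : ι → ℝ → ℝ) (h : ∀ i ∈ t, ConvexOn ℝ s (f i)) :
    ConvexOn ℝ s (fun x => ∑ i ∈ t, f i x) := by
  classical
  induction t using Finset.induction_on with
  | empty => simpa using convexOn_const 0 hs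
  | insert _ _ hx ih =>
      simp only [Finset.sum_insert hx]
      exact (h _ (Finset.mem_insert_self _ _)).add (ih fun i hi => h i (Finset.mem_insert_of_mem hi))

private lemma convexOn_log_Gamma_shift (n j : ℕ) (hn : 0 < n) :
    ConvexOn ℝ (Ioi (0:ℝ)) (fun s => log (Real.Gamma ((s + j) / n))) := by
  have hn' : (0:ℝ) < n := by exact_mod_cast hn
  refine ⟨convex_Ioi _, fun x hx y hy α β hα hβ hαβ => ?_⟩
  have hx' : (x + j)/n ∈ Ioi (0:ℝ) := by
    have : (0:ℝ) < x + j := by have := mem_Ioi.mp hx; positivity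
    exact mem_Ioi.mpr (by positivity)
  have hy' : (y + j)/n ∈ Ioi (0:ℝ) := by
    have : (0:ℝ) < y + j := by have := mem_Ioi.mp hy; positivity
    exact mem_Ioi.mpr (by positivity)
  have key := convexOn_log_Gamma.2 hx' hy' hα hβ hαβ
  simp only [Function.comp_apply, smul_eq_mul] at key ⊢
  have harg : (α * x + β * y + j) / n = α * ((x + j)/n) + β * ((y + j)/n) := by
    field_simp
    nlinarith [hαβ]
  rw [harg]
  exact key

theorem gaussProd (n : ℕ) (hn : 0 < n) {x : ℝ} (hx : 0 < x) :
    ∏ j ∈ Finset.range n, Real.Gamma ((x + j) / n) =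
      ((n:ℝ) * ∏ j ∈ Finset.range (n - 1), Real.Gamma ((j + 1 : ℝ) / n)) *
        (n:ℝ) ^ (-x) * Real.Gamma x := by
  have hn' : (0:ℝ) < n := by exact_mod_cast hn
  set C : ℝ := (n:ℝ) * ∏ j ∈ Finset.range (n - 1), Real.Gamma ((j + 1 : ℝ) / n) with hCdef
  have hC : 0 < C := mul_pos hn' (Finset.prod_pos fun j _ => Gamma_pos_of_pos (by positivity))
  have hprod_pos : ∀ {y : ℝ}, 0 < y → 0 < ∏ j ∈ Finset.range n, Real.Gamma ((y + j) / n) := by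
    intro y hy
    exact Finset.prod_pos fun j _ => Gamma_pos_of_pos (by positivity)
  set f : ℝ → ℝ := fun s => ((n:ℝ) ^ s * ∏ j ∈ Finset.range n, Real.Gamma ((s + j) / n)) / C
    with hfdef
  have h_pos : ∀ {y : ℝ}, 0 < y → 0 < f y := by
    intro y hy
    exact div_pos (mul_pos (rpow_pos_of_pos hn' _) (hprod_pos hy)) hC
  have h_feq : ∀ {y : ℝ}, 0 < y → f (y + 1) = y * f y := by
    intro y hy
    have hyn : (0:ℝ) < y / n := by positivity
    have key : ∏ j ∈ Finset.range n, Real.Gamma ((y + 1 + j) / n) =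
        (∏ j ∈ Finset.range n, Real.Gamma ((y + j) / n)) * (y / n) := by
      have h1 : ∏ j ∈ Finset.range (n + 1), Real.Gamma ((y + j) / n) =
          (∏ j ∈ Finset.range n, Real.Gamma ((y + (j + 1)) / n)) * Real.Gamma ((y + 0) / n) := by
        simpa using Finset.prod_range_succ' (fun j => Real.Gamma ((y + j) / n)) n
      have h2 : ∏ j ∈ Finset.range (n + 1), Real.Gamma ((y + j) / n) =
          (∏ j ∈ Finset.range n, Real.Gamma ((y + j) / n)) * Real.Gamma ((y + n) / n) :=
        Finset.prod_range_succ _ n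
      have h3 : Real.Gamma ((y + n) / n) = (y / n) * Real.Gamma (y / n) := by
        have : (y + n) / n = y / n + 1 := by field_simp
        rw [this, Real.Gamma_add_one hyn.ne']
      have h4 : ∀ j : ℕ, (y + 1 + (j:ℝ)) / n = (y + ((j:ℝ) + 1)) / n := by
        intro j; ring_nf
      have hG : Real.Gamma (y / n) ≠ 0 := (Gamma_pos_of_pos hyn).ne'
      have h5 : (∏ j ∈ Finset.range n, Real.Gamma ((y + ((j:ℕ) + 1 : ℝ)) / n)) *
          Real.Gamma (y / n) =
          (∏ j ∈ Finset.range n, Real.Gamma ((y + j) / n)) * ((y / n) * Real.Gamma (y / n)) := by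
        have := h1.symm.trans h2
        rw [h3] at this
        simpa [add_zero] using this
      calc ∏ j ∈ Finset.range n, Real.Gamma ((y + 1 + j) / n)
          = ∏ j ∈ Finset.range n, Real.Gamma ((y + ((j:ℕ) + 1 : ℝ)) / n) := by
            exact Finset.prod_congr rfl fun j _ => by rw [h4 j]
        _ = (∏ j ∈ Finset.range n, Real.Gamma ((y + j) / n)) * (y / n) := by
            rw [show (∏ j ∈ Finset.range n, Real.Gamma ((y + (j:ℝ)) / n)) * ((y / n) * Real.Gamma (y / n)) = ((∏ j ∈ Finset.range n, Real.Gamma ((y + (j:ℝ)) / n)) * (y / n)) * Real.Gamma (y / n) from by ring] at h5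
            exact mul_right_cancel₀ hG h5
    simp only [hfdef]
    rw [key, rpow_add hn' y 1, rpow_one]
    field_simp
  have h_one : f 1 = 1 := by
    obtain ⟨n', rfl⟩ : ∃ n', n = n' + 1 := ⟨n - 1, (Nat.succ_pred_eq_of_pos hn).symm⟩
    simp only [hfdef, hCdef, Nat.add_sub_cancel]
    have h1 : ∏ j ∈ Finset.range (n' + 1), Real.Gamma ((1 + j) / (↑(n' + 1):ℝ)) =
        (∏ j ∈ Finset.range n', Real.Gamma ((1 + j) / (↑(n' + 1):ℝ))) *
          Real.Gamma ((1 + n') / (↑(n' + 1):ℝ)) := Finset.prod_range_succ _ _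
    have h2 : ((1:ℝ) + n') / (↑(n' + 1):ℝ) = 1 := by
      have : (↑(n' + 1):ℝ) = (n':ℝ) + 1 := by push_cast; ring
      rw [this]; field_simp; ring
    have h3 : ∀ j : ℕ, ((1:ℝ) + j) / (↑(n' + 1):ℝ) = ((j:ℝ) + 1) / (↑(n' + 1):ℝ) := by
      intro j; ring_nf
    rw [h1, h2, Real.Gamma_one, mul_one, rpow_one]
    rw [Finset.prod_congr rfl fun j _ => by rw [h3 j]]
    field_simp
  have h_conv : ConvexOn ℝ (Ioi 0) (log ∘ f) := by
    have hg : ConvexOn ℝ (Ioi (0:ℝ))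
        (fun s => ((∑ j ∈ Finset.range n, log (Real.Gamma ((s + j) / n))) + log n * s)
          + (- log C)) := by
      refine ConvexOn.add_const ?_ _
      refine ConvexOn.add ?_ ?_
      · exact convexOn_finsum _ (convex_Ioi _) _ fun j _ => convexOn_log_Gamma_shift n j hn
      · simpa using (convexOn_id (convex_Ioi (0:ℝ))).smul (log_nonneg (by exact_mod_cast hn))
    refine hg.congr ?_
    intro s hs
    have hs' : (0:ℝ) < s := mem_Ioi.mp hs
    simp only [Function.comp_apply, hfdef]
    rw [log_div (by positivity) hC.ne', log_mul (by positivity) (hprod_pos hs').ne',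
      log_rpow hn', Real.log_prod fun j _ => (Gamma_pos_of_pos (by positivity)).ne']
    ring
  have := Real.eq_Gamma_of_log_convex h_conv h_feq h_pos h_one (mem_Ioi.mpr hx)
  simp only [hfdef] at this
  rw [div_eq_iff hC.ne'] at this
  have hrw : (n:ℝ) ^ x ≠ 0 := (rpow_pos_of_pos hn' _).ne'
  rw [rpow_neg hn'.le]
  field_simp at this ⊢
  linear_combination this


-- (r + q*μ) % (p*μ) = r + (q % p)*μ
private lemma aux_mod (μ p r q : ℕ) (hp : 0 < p) (hr : r < μ) :
    (r + q * μ) % (p * μ) = r + q % p * μ := by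
  have h := Nat.div_add_mod q p
  have h1 : r + q * μ = (r + q % p * μ) + (q / p) * (p * μ) := by
    calc r + q * μ = r + (p * (q / p) + q % p) * μ := by rw [h]
    _ = (r + q % p * μ) + (q / p) * (p * μ) := by ring
  rw [h1, Nat.add_mul_mod_self_right, Nat.mod_eq_of_lt]
  have h2 : q % p < p := Nat.mod_lt _ hp
  have h3 : (q % p + 1) * μ ≤ p * μ := Nat.mul_le_mul_right μ (by omega)
  have h4 : (q % p + 1) * μ = q % p * μ + μ := by ring
  omega


private lemma repZ_natCast (m x : ℕ) : repZ m (x : ℤ) = x % m := by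
  unfold repZ
  rw [show ((x:ℤ) % (m:ℤ)) = ((x % m : ℕ) : ℤ) by push_cast; rfl]
  exact Int.toNat_natCast _

private lemma repZ_neg_natCast (m x : ℕ) (hm : 0 < m) (h : x % m ≠ 0) :
    repZ m (-(x : ℤ)) = m - x % m := by
  have hm' : (0:ℤ) < m := by exact_mod_cast hm
  have h1 := Int.emod_add_mul_ediv (-(x:ℤ)) m
  have h2 := Int.emod_add_mul_ediv (x:ℤ) m
  have h3 : 0 ≤ (-(x:ℤ)) % m := Int.emod_nonneg _ hm'.ne'
  have h4 : (-(x:ℤ)) % m < m := Int.emod_lt_of_pos _ hm'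
  have h5 : 0 ≤ (x:ℤ) % m := Int.emod_nonneg _ hm'.ne'
  have h6 : (x:ℤ) % m < m := Int.emod_lt_of_pos _ hm'
  have h7 : (x:ℤ) % m = ((x % m : ℕ) : ℤ) := by push_cast; rfl
  have h8 : (0:ℤ) < (x:ℤ) % m := by
    rw [h7]; exact_mod_cast Nat.pos_of_ne_zero h
  set c : ℤ := -((-(x:ℤ)) / m + (x:ℤ) / m) with hc
  have hsum : (-(x:ℤ)) % m + (x:ℤ) % m = m * c := by
    rw [hc]; linarith
  have hc1 : 0 < c := by nlinarith
  have hc2 : c < 2 := by nlinarith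
  have hc3 : c = 1 := by omega
  rw [hc3, mul_one] at hsum
  have : (-(x:ℤ)) % m = m - (x:ℤ) % m := by linarith
  unfold repZ
  rw [this, h7]
  have hle : x % m ≤ m := (Nat.mod_lt _ hm).le
  omega

-- constant evaluation: ∏_{j<2h} Γ((j+1)/p) = ∏_{j<h} π / sin (π(j+1)/p), p = 2h+1
private lemma prod_gamma_half (h : ℕ) (p : ℕ) (hp : p = 2 * h + 1) :
    ∏ j ∈ Finset.range (2 * h), Real.Gamma ((j + 1 : ℝ) / p) =
      ∏ j ∈ Finset.range h, (π / Real.sin (π * ((j + 1 : ℝ) / p))) := by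
  have hp' : (p:ℝ) = 2 * h + 1 := by rw [hp]; push_cast; ring
  have key : ∏ j ∈ Finset.range (h + h), Real.Gamma ((j + 1 : ℝ) / p) =
      (∏ j ∈ Finset.range h, Real.Gamma ((j + 1 : ℝ) / p)) *
        ∏ j ∈ Finset.range h, Real.Gamma ((↑(h + j) + 1 : ℝ) / p) :=
    Finset.prod_range_add _ h h
  have hrefl : ∏ j ∈ Finset.range h, Real.Gamma ((↑(h + (h - 1 - j)) + 1 : ℝ) / p) =
      ∏ j ∈ Finset.range h, Real.Gamma ((↑(h + j) + 1 : ℝ) / p) :=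
    Finset.prod_range_reflect (fun j => Real.Gamma ((↑(h + j) + 1 : ℝ) / p)) h
  have step : ∀ j ∈ Finset.range h,
      Real.Gamma ((↑(h + (h - 1 - j)) + 1 : ℝ) / p) = Real.Gamma (1 - (j + 1 : ℝ) / p) := by
    intro j hj
    have hjh : j < h := Finset.mem_range.mp hj
    congr 1
    have hn : (h + (h - 1 - j)) + 1 + j = 2 * h := by omega
    have hn' : (↑(h + (h - 1 - j)) : ℝ) + 1 + (j:ℝ) = 2 * (h:ℝ) := by exact_mod_cast hn
    have hp0 : (p:ℝ) ≠ 0 := by rw [hp']; positivity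
    push_cast at hn'
    field_simp
    push_cast
    linarith [hp']
  rw [two_mul, key, ← hrefl, Finset.prod_congr rfl step, ← Finset.prod_mul_distrib]
  exact Finset.prod_congr rfl fun j _ => Real.Gamma_mul_Gamma_one_sub ((j + 1 : ℝ) / p)

private lemma prod_mod_bij {M : Type*} [CommMonoid M] (p ε : ℕ) (hp : p.Prime) (hodd : Odd p)
    (F : ℕ → M) :
    ∏ j ∈ Finset.range p, F ((2 * j + ε) % p) = ∏ i ∈ Finset.range p, F i := by
  haveI := Fact.mk hp
  have hppos : 0 < p := hp.pos
  have h2 : ((2:ℕ) : ZMod p) ≠ 0 := by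
    rw [Ne, ZMod.natCast_eq_zero_iff]
    intro hdvd
    have := Nat.le_of_dvd (by norm_num) hdvd
    have h3 : 3 ≤ p := by
      rcases hodd with ⟨t, ht⟩
      have := hp.two_le
      omega
    omega
  have hinj : ∀ x ∈ Finset.range p, ∀ y ∈ Finset.range p,
      (2 * x + ε) % p = (2 * y + ε) % p → x = y := by
    intro x hx y hy hxy
    have hx' := Finset.mem_range.mp hx
    have hy' := Finset.mem_range.mp hy
    have hcast : ((2 * x + ε : ℕ) : ZMod p) = ((2 * y + ε : ℕ) : ZMod p) := by
      rw [← ZMod.natCast_mod _ p, hxy, ZMod.natCast_mod]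
    push_cast at hcast
    have : ((x:ℕ) : ZMod p) = ((y:ℕ) : ZMod p) := by
      have h2' : (2 : ZMod p) * x = 2 * y := by
        have : ((2:ℕ) : ZMod p) = (2 : ZMod p) := by push_cast; rfl
        linear_combination hcast
      exact mul_left_cancel₀ (by exact_mod_cast h2) h2'
    calc x = ((x:ℕ) : ZMod p).val := (ZMod.val_cast_of_lt hx').symm
    _ = ((y:ℕ) : ZMod p).val := by rw [this]
    _ = y := ZMod.val_cast_of_lt hy'
  have himg : (Finset.range p).image (fun j => (2 * j + ε) % p) = Finset.range p := by
    apply Finset.eq_of_subset_of_card_le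
    · intro x hx
      rw [Finset.mem_image] at hx
      obtain ⟨j, _, rfl⟩ := hx
      exact Finset.mem_range.mpr (Nat.mod_lt _ hppos)
    · rw [Finset.card_image_of_injOn]
      intro x hx y hy hxy
      exact hinj x (by simpa using hx) y (by simpa using hy) hxy
  calc ∏ j ∈ Finset.range p, F ((2 * j + ε) % p)
      = ∏ i ∈ (Finset.range p).image (fun j => (2 * j + ε) % p), F i :=
        (Finset.prod_image hinj).symm
    _ = ∏ i ∈ Finset.range p, F i := by rw [himg]

set_option maxHeartbeats 1600000 in
/-- from the proof of Theorem 7.2.12. Let `p` be an odd prime, `k ≥ 2`,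
`m = p^k`, `a` an integer with `1 ≤ a ≤ m - 1` and `p ∣ a`, and `a' = a/p`.
Let `T = {a' + j·p^(k-1) : 0 ≤ j ≤ p-1}` and let `B, C` partition `T` with
`#B = (p-1)/2` and `#C = (p+1)/2`. Then the Gamma-value
`Γ(f_a) = Γ(a/m)²·Γ([-2a]/m) · ∏_{b∈B} Γ((m-b)/m)²·Γ([2b]/m) / ∏_{c∈C} Γ(c/m)²·Γ([-2c]/m)`
belongs to `ℚ(ζ_m)ˣ · π^ℤ`. -/
theorem gamma_value_mem_cyclotomic_mul_pi_pow
    (p k : ℕ) (hp : p.Prime) (hodd : Odd p) (hk : 2 ≤ k)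
    (a : ℕ) (ha1 : 1 ≤ a) (ha2 : a ≤ p ^ k - 1) (hpa : p ∣ a)
    (B C : Finset ℕ)
    (hBC : B ∪ C = (Finset.range p).image (fun j => a / p + j * p ^ (k - 1)))
    (hdisj : Disjoint B C)
    (hB : B.card = (p - 1) / 2) (hC : C.card = (p + 1) / 2) :
    ∃ (N : ℤ) (w : ℂ), w ≠ 0 ∧
      w ∈ Algebra.adjoin ℚ
        ({Complex.exp (2 * (Real.pi : ℂ) * Complex.I / ((p ^ k : ℕ) : ℂ))} : Set ℂ) ∧
      Complex.Gamma ((a : ℂ) / ((p ^ k : ℕ) : ℂ)) ^ 2 *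
          Complex.Gamma ((repZ (p ^ k) (-2 * (a : ℤ)) : ℂ) / ((p ^ k : ℕ) : ℂ)) *
          (∏ b ∈ B, Complex.Gamma (((p ^ k - b : ℕ) : ℂ) / ((p ^ k : ℕ) : ℂ)) ^ 2 *
            Complex.Gamma ((repZ (p ^ k) (2 * (b : ℤ)) : ℂ) / ((p ^ k : ℕ) : ℂ))) /
          (∏ c ∈ C, Complex.Gamma ((c : ℂ) / ((p ^ k : ℕ) : ℂ)) ^ 2 *
            Complex.Gamma ((repZ (p ^ k) (-2 * (c : ℤ)) : ℂ) / ((p ^ k : ℕ) : ℂ)))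
        = w * (Real.pi : ℂ) ^ N := by
  classical
  have hp2 := hp.two_le
  have hp3 : 3 ≤ p := by rcases hodd with ⟨t, ht⟩; omega
  obtain ⟨a', rfl⟩ := hpa
  have hppos : 0 < p := by omega
  set m := p ^ k with hmdef
  set μ := p ^ (k - 1) with hμdef
  have hμpos : 0 < μ := pow_pos hppos _
  have hmμ : m = p * μ := by
    rw [hmdef, hμdef, ← pow_succ', show k - 1 + 1 = k by omega]
  have hmpos : 0 < m := by rw [hmμ]; positivity
  have ha'pos : 1 ≤ a' := by
    rcases Nat.eq_zero_or_pos a' with h | h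
    · subst h; simp at ha1
    · exact h
  have ha'lt : a' < μ := by
    have h1 : p * a' < p * μ := by rw [← hmμ]; omega
    exact Nat.lt_of_mul_lt_mul_left h1
  set r := 2 * a' % μ with hrdef
  set ε := 2 * a' / μ with hεdef
  have hsplit : μ * ε + r = 2 * a' := Nat.div_add_mod _ _
  have hrμ : r < μ := Nat.mod_lt _ hμpos
  have hrpos : 0 < r := by
    rcases Nat.eq_zero_or_pos r with h | h
    · exfalso
      have hdvd : μ ∣ 2 * a' := ⟨ε, by omega⟩
      have hμodd : Odd μ := hodd.pow
      have hco : Nat.Coprime μ 2 := hμodd.coprime_two_right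
      have hdvd' : μ ∣ a' := hco.dvd_of_dvd_mul_left hdvd
      exact absurd (Nat.le_of_dvd ha'pos hdvd') (by omega)
    · exact h
  have hε1 : ε ≤ 1 := by
    have h1 : 2 * a' < 2 * μ := by omega
    have := (Nat.div_lt_iff_lt_mul hμpos).mpr h1
    omega
  set q := (p - 1) / 2 with hqdef
  have hpq : p = 2 * q + 1 := by rcases hodd with ⟨t, ht⟩; omega
  have hBq : B.card = q := hB
  have hCq : C.card = q + 1 := by rw [hC]; omega
  set sg : ℕ → ℕ := fun t => 2 * t % m with hsgdef
  have hσval : ∀ j : ℕ, sg (a' + j * μ) = r + (2 * j + ε) % p * μ := by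
    intro j
    show 2 * (a' + j * μ) % m = _
    have e0 : 2 * (a' + j * μ) = μ * ε + r + 2 * (j * μ) := by rw [hsplit]; ring
    have e1 : 2 * (a' + j * μ) = r + (2 * j + ε) * μ := by rw [e0]; ring
    rw [e1, hmμ]
    exact aux_mod μ p r _ hppos hrμ
  have hBC' : B ∪ C = (Finset.range p).image (fun j => a' + j * μ) := by
    rw [hBC, Nat.mul_div_cancel_left a' hppos]
  -- bounds
  have hTbound : ∀ x ∈ B ∪ C, 1 ≤ x ∧ x ≤ m - 1 := by
    intro x hx
    rw [hBC', Finset.mem_image] at hx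
    obtain ⟨j, hj, rfl⟩ := hx
    have hj' : j < p := Finset.mem_range.mp hj
    have h1 : j * μ ≤ (p - 1) * μ := Nat.mul_le_mul_right μ (by omega)
    have h2 : (p - 1) * μ + μ = m := by
      rw [hmμ, Nat.sub_one_mul, Nat.sub_add_cancel (Nat.le_mul_of_pos_left μ hppos)]
    omega
  have hσbound : ∀ x ∈ B ∪ C, 1 ≤ sg x ∧ sg x ≤ m - 1 := by
    intro x hx
    rw [hBC', Finset.mem_image] at hx
    obtain ⟨j, hj, rfl⟩ := hx
    rw [hσval j]
    have h0 : (2 * j + ε) % p < p := Nat.mod_lt _ hppos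
    have h1 : (2 * j + ε) % p * μ ≤ (p - 1) * μ := Nat.mul_le_mul_right μ (by omega)
    have h2 : (p - 1) * μ + μ = m := by
      rw [hmμ, Nat.sub_one_mul, Nat.sub_add_cancel (Nat.le_mul_of_pos_left μ hppos)]
    omega
  have hprbound : 1 ≤ p * r ∧ p * r ≤ m - 1 := by
    have h1 : p * r < p * μ := mul_lt_mul_of_pos_left hrμ hppos
    have h2 : 1 ≤ p * r := Nat.mul_pos hppos hrpos
    omega
  -- repZ computations
  have hrepZ2 : ∀ x : ℕ, repZ m (2 * (x : ℤ)) = sg x := by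
    intro x
    rw [show (2 * (x : ℤ)) = ((2 * x : ℕ) : ℤ) by push_cast; ring, repZ_natCast]
  have hrepZneg : ∀ x ∈ B ∪ C, repZ m (-2 * (x : ℤ)) = m - sg x := by
    intro x hx
    have h1 : 1 ≤ 2 * x % m := (hσbound x hx).1
    rw [show (-2 * (x : ℤ)) = -((2 * x : ℕ) : ℤ) by push_cast; ring,
      repZ_neg_natCast m (2 * x) hmpos (by omega)]
  have hkey2a : 2 * (p * a') = m * ε + p * r := by
    have e0 : 2 * (p * a') = p * (μ * ε + r) := by rw [hsplit]; ring
    rw [e0, hmμ]; ring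
  have h2pa : 2 * (p * a') % m = p * r := by
    rw [hkey2a, Nat.mul_add_mod, Nat.mod_eq_of_lt (by omega)]
  have hrepZa : repZ m (-2 * ((p * a' : ℕ) : ℤ)) = m - p * r := by
    rw [show (-2 * ((p * a' : ℕ) : ℤ)) = -((2 * (p * a') : ℕ) : ℤ) by push_cast; ring,
      repZ_neg_natCast m _ hmpos (by rw [h2pa]; omega), h2pa]
  -- real-side setup
  have hm0 : (0:ℝ) < m := by exact_mod_cast hmpos
  have hp0 : (0:ℝ) < p := by exact_mod_cast hppos
  set G : ℕ → ℝ := fun t => Real.Gamma ((t:ℝ) / (m:ℝ)) with hGdef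
  set S : ℕ → ℝ := fun t => Real.sin (π * t / m) with hSdef
  have hGpos : ∀ t : ℕ, 1 ≤ t → 0 < G t := by
    intro t ht
    have h1 : (0:ℝ) < t := by exact_mod_cast ht
    exact Real.Gamma_pos_of_pos (by positivity)
  have hSpos : ∀ t : ℕ, 1 ≤ t → t ≤ m - 1 → 0 < S t := by
    intro t h1 h2
    have h3 : (0:ℝ) < t := by exact_mod_cast h1
    have h4 : (t:ℝ) < m := by exact_mod_cast (show t < m by omega)
    apply Real.sin_pos_of_pos_of_lt_pi
    · positivity
    · rw [div_lt_iff₀ hm0] at *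
      nlinarith [Real.pi_pos]
  set xa : ℝ := ((p * a' : ℕ):ℝ) / (m:ℝ) with hxadef
  set xv : ℝ := ((p * r : ℕ):ℝ) / (m:ℝ) with hxvdef
  have hxa_pos : 0 < xa := by
    have h1 : (0:ℝ) < ((p * a' : ℕ):ℝ) := by exact_mod_cast ha1
    positivity
  have hxv_pos : 0 < xv := by
    have h1 : (0:ℝ) < ((p * r : ℕ):ℝ) := by exact_mod_cast hprbound.1
    positivity
  set Cf : ℝ := (p:ℝ) * ∏ j ∈ Finset.range (p - 1), Real.Gamma (((j:ℝ) + 1) / (p:ℝ))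
    with hCfdef
  set pw1 : ℝ := (p:ℝ) ^ (-xa) with hpw1def
  set pw2 : ℝ := (p:ℝ) ^ (-xv) with hpw2def
  have hCfpos : 0 < Cf :=
    mul_pos hp0 (Finset.prod_pos fun j _ => Real.Gamma_pos_of_pos (by positivity))
  have hpw1pos : 0 < pw1 := Real.rpow_pos_of_pos hp0 _
  have hpw2pos : 0 < pw2 := Real.rpow_pos_of_pos hp0 _
  have hunion : ∀ F : ℕ → ℝ,
      (∏ t ∈ B, F t) * (∏ t ∈ C, F t) = ∏ j ∈ Finset.range p, F (a' + j * μ) := by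
    intro F
    rw [← Finset.prod_union hdisj, hBC']
    refine Finset.prod_image ?_
    intro x _ y _ hxy
    have h1 : x * μ = y * μ := by beta_reduce at hxy; omega
    exact Nat.eq_of_mul_eq_mul_right hμpos h1
  have hσprodgen : ∀ F : ℕ → ℝ,
      (∏ t ∈ B, F (sg t)) * (∏ t ∈ C, F (sg t)) = ∏ i ∈ Finset.range p, F (r + i * μ) := by
    intro F
    rw [hunion (fun t => F (sg t)),
      Finset.prod_congr rfl fun j (_ : j ∈ Finset.range p) => by rw [hσval j]]
    exact prod_mod_bij p ε hp hodd (fun i => F (r + i * μ))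
  have harg : ∀ s j : ℕ, (((p * s : ℕ):ℝ) / (m:ℝ) + (j:ℝ)) / (p:ℝ) =
      ((s + j * μ : ℕ):ℝ) / (m:ℝ) := by
    intro s j
    rw [hmμ]
    push_cast
    have hμ0 : (0:ℝ) < μ := by exact_mod_cast hμpos
    field_simp
  have hG1 : (∏ t ∈ B, G t) * (∏ t ∈ C, G t) = Cf * pw1 * Real.Gamma xa := by
    rw [hunion G]
    calc ∏ j ∈ Finset.range p, G (a' + j * μ)
        = ∏ j ∈ Finset.range p, Real.Gamma ((xa + (j:ℝ)) / p) := by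
          refine Finset.prod_congr rfl fun j _ => ?_
          rw [hGdef]
          exact congrArg Real.Gamma (harg a' j).symm
      _ = Cf * pw1 * Real.Gamma xa := gaussProd p hppos hxa_pos
  have hG2 : (∏ t ∈ B, G (sg t)) * (∏ t ∈ C, G (sg t)) = Cf * pw2 * Real.Gamma xv := by
    rw [hσprodgen G]
    calc ∏ i ∈ Finset.range p, G (r + i * μ)
        = ∏ i ∈ Finset.range p, Real.Gamma ((xv + (i:ℝ)) / p) := by
          refine Finset.prod_congr rfl fun i _ => ?_
          rw [hGdef]
          exact congrArg Real.Gamma (harg r i).symm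
      _ = Cf * pw2 * Real.Gamma xv := gaussProd p hppos hxv_pos
  set S0 : ℝ := ∏ j ∈ Finset.range q, S ((j + 1) * μ) with hS0def
  have hS0bounds : ∀ j : ℕ, j < q → 1 ≤ (j + 1) * μ ∧ (j + 1) * μ ≤ m - 1 := by
    intro j hj
    have h1 : (j + 1) * μ ≤ (p - 1) * μ := Nat.mul_le_mul_right μ (by omega)
    have h2 : (p - 1) * μ + μ = m := by
      rw [hmμ, Nat.sub_one_mul, Nat.sub_add_cancel (Nat.le_mul_of_pos_left μ hppos)]
    have h3 : 1 * μ ≤ (j + 1) * μ := Nat.mul_le_mul_right μ (by omega)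
    omega
  have hS0pos : 0 < S0 :=
    Finset.prod_pos fun j hj => hSpos _ (hS0bounds j (Finset.mem_range.mp hj)).1
      (hS0bounds j (Finset.mem_range.mp hj)).2
  have hCf' : Cf * S0 = p * π ^ q := by
    have h1 : p - 1 = 2 * q := by omega
    have h2 := prod_gamma_half q p hpq
    have h3 : ∀ j ∈ Finset.range q,
        (π / Real.sin (π * (((j:ℝ) + 1) / p))) = π / S ((j + 1) * μ) := by
      intro j _
      congr 1
      rw [hSdef]
      congr 1
      rw [hmμ]
      push_cast
      have hμ0 : (0:ℝ) < μ := by exact_mod_cast hμpos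
      field_simp
    rw [hCfdef, h1, h2, Finset.prod_congr rfl h3, Finset.prod_div_distrib,
      Finset.prod_const, Finset.card_range]
    rw [hS0def]
    field_simp
    exact div_self (by rw [← hS0def]; exact hS0pos.ne')
  have hrefl : ∀ t : ℕ, 1 ≤ t → t ≤ m - 1 → G t * G (m - t) = π / S t := by
    intro t h1 h2
    have h3 : t ≤ m := by omega
    have hmt : ((m - t : ℕ):ℝ) / m = 1 - (t:ℝ) / m := by
      push_cast [Nat.cast_sub h3]
      field_simp
    rw [hGdef, hSdef]
    simp only []
    rw [hmt, Real.Gamma_mul_Gamma_one_sub]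
    congr 1
    ring
  set P1 : ℝ := ∏ t ∈ B, G t with hP1def
  set P2 : ℝ := ∏ t ∈ C, G t with hP2def
  set Q1 : ℝ := ∏ t ∈ B, G (sg t) with hQ1def
  set Q2 : ℝ := ∏ t ∈ C, G (sg t) with hQ2def
  set S1 : ℝ := ∏ t ∈ B, S t with hS1def
  set S2 : ℝ := ∏ t ∈ C, S (sg t) with hS2def
  have hP2pos : 0 < P2 :=
    Finset.prod_pos fun t ht => hGpos t (hTbound t (Finset.mem_union_right B ht)).1
  have hQ1pos : 0 < Q1 :=
    Finset.prod_pos fun t ht => hGpos _ (hσbound t (Finset.mem_union_left C ht)).1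
  have hQ2pos : 0 < Q2 :=
    Finset.prod_pos fun t ht => hGpos _ (hσbound t (Finset.mem_union_right B ht)).1
  have hS1pos : 0 < S1 := Finset.prod_pos fun t ht =>
    hSpos t (hTbound t (Finset.mem_union_left C ht)).1 (hTbound t (Finset.mem_union_left C ht)).2
  have hS2pos : 0 < S2 := Finset.prod_pos fun t ht =>
    hSpos _ (hσbound t (Finset.mem_union_right B ht)).1
      (hσbound t (Finset.mem_union_right B ht)).2
  have hsvpos : 0 < S (p * r) := hSpos _ hprbound.1 hprbound.2
  have hπpos : (0:ℝ) < π := Real.pi_pos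
  have hR1' : (∏ t ∈ B, G (m - t)) * P1 * S1 = π ^ q := by
    have h1 : ∏ t ∈ B, (G t * G (m - t)) = ∏ t ∈ B, (π / S t) :=
      Finset.prod_congr rfl fun b hb =>
        hrefl b (hTbound b (Finset.mem_union_left C hb)).1
          (hTbound b (Finset.mem_union_left C hb)).2
    rw [Finset.prod_mul_distrib, Finset.prod_div_distrib, Finset.prod_const, hBq] at h1
    rw [← hP1def, ← hS1def] at h1
    field_simp at h1
    linear_combination h1
  have hR4' : (∏ t ∈ C, G (m - sg t)) * Q2 * S2 = π ^ (q + 1) := by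
    have h1 : ∏ t ∈ C, (G (sg t) * G (m - sg t)) = ∏ t ∈ C, (π / S (sg t)) :=
      Finset.prod_congr rfl fun c hc =>
        hrefl _ (hσbound c (Finset.mem_union_right B hc)).1
          (hσbound c (Finset.mem_union_right B hc)).2
    rw [Finset.prod_mul_distrib, Finset.prod_div_distrib, Finset.prod_const, hCq] at h1
    rw [← hQ2def, ← hS2def] at h1
    field_simp at h1
    linear_combination h1
  have hΓv : Real.Gamma xv = G (p * r) := by rw [hxvdef, hGdef]
  have hrv' : Real.Gamma xv * G (m - p * r) * S (p * r) = π := by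
    have h1 := hrefl (p * r) hprbound.1 hprbound.2
    rw [hΓv]
    field_simp at h1 ⊢
    linear_combination h1
  have hexp' : (p:ℝ) ^ ε * pw1 ^ 2 = pw2 := by
    rw [hpw1def, hpw2def, ← Real.rpow_natCast (p:ℝ) ε, sq, ← Real.rpow_add hp0,
      ← Real.rpow_add hp0]
    congr 1
    rw [hxadef, hxvdef]
    have hc : ((m:ℝ)) * (ε:ℝ) + (p:ℝ) * (r:ℝ) = 2 * ((p:ℝ) * (a':ℝ)) := by
      exact_mod_cast congrArg (Nat.cast : ℕ → ℝ) hkey2a.symm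
    push_cast
    field_simp
    first
    | linear_combination (m:ℝ)^2 * hc
    | linear_combination (m:ℝ) * hc
    | linear_combination hc
    | linarith
  have hΓa_s : Real.Gamma xa = P1 * P2 / (Cf * pw1) := by
    rw [eq_div_iff (mul_pos hCfpos hpw1pos).ne']
    linear_combination -hG1
  have hGmpr_s : G (m - p * r) = π * (Cf * pw2) / (S (p * r) * (Q1 * Q2)) := by
    rw [eq_div_iff (mul_pos hsvpos (mul_pos hQ1pos hQ2pos)).ne']
    linear_combination G (m - p * r) * S (p * r) * hG2 + Cf * pw2 * hrv'
  have hR1_s : (∏ t ∈ B, G (m - t)) = π ^ q / (S1 * P1) := by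
    have hP1pos : 0 < P1 :=
      Finset.prod_pos fun t ht => hGpos t (hTbound t (Finset.mem_union_left C ht)).1
    rw [eq_div_iff (mul_pos hS1pos hP1pos).ne']
    linear_combination hR1'
  have hR4_s : (∏ t ∈ C, G (m - sg t)) = π ^ (q + 1) / (S2 * Q2) := by
    rw [eq_div_iff (mul_pos hS2pos hQ2pos).ne']
    linear_combination hR4'
  have hEkey : Real.Gamma xa ^ 2 * G (m - p * r) *
        (∏ b ∈ B, G (m - b) ^ 2 * G (sg b)) / (∏ c ∈ C, G c ^ 2 * G (m - sg c)) =
      (p:ℝ) ^ ε / p * (S0 * S2) / (S (p * r) * S1 ^ 2) := by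
    have hpB : ∏ b ∈ B, (G (m - b) ^ 2 * G (sg b)) = (∏ t ∈ B, G (m - t)) ^ 2 * Q1 := by
      rw [Finset.prod_mul_distrib, Finset.prod_pow, hQ1def]
    have hpC : ∏ c ∈ C, (G c ^ 2 * G (m - sg c)) = P2 ^ 2 * (∏ t ∈ C, G (m - sg t)) := by
      rw [Finset.prod_mul_distrib, Finset.prod_pow, hP2def]
    have hCf_s : Cf = p * π ^ q / S0 := by
      rw [eq_div_iff hS0pos.ne']
      linear_combination hCf'
    have hP1pos : 0 < P1 :=
      Finset.prod_pos fun t ht => hGpos t (hTbound t (Finset.mem_union_left C ht)).1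
    rw [hpB, hpC, hΓa_s, hGmpr_s, hR1_s, hR4_s, ← hexp', hCf_s]
    have hP1ne : P1 ≠ 0 := hP1pos.ne'
    have hP2ne : P2 ≠ 0 := hP2pos.ne'
    have hQ1ne : Q1 ≠ 0 := hQ1pos.ne'
    have hQ2ne : Q2 ≠ 0 := hQ2pos.ne'
    have hS1ne : S1 ≠ 0 := hS1pos.ne'
    have hS2ne : S2 ≠ 0 := hS2pos.ne'
    have hS0ne : S0 ≠ 0 := hS0pos.ne'
    have hsvne : S (p * r) ≠ 0 := hsvpos.ne'
    have hπne : π ≠ 0 := hπpos.ne'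
    have hpw1ne : pw1 ≠ 0 := hpw1pos.ne'
    have hpne : (p:ℝ) ≠ 0 := hp0.ne'
    field_simp
    ring
  set Ereal : ℝ := Real.Gamma xa ^ 2 * G (m - p * r) *
      (∏ b ∈ B, G (m - b) ^ 2 * G (sg b)) / (∏ c ∈ C, G c ^ 2 * G (m - sg c)) with hErealdef
  have hprodBpos : 0 < ∏ b ∈ B, G (m - b) ^ 2 * G (sg b) := by
    refine Finset.prod_pos fun b hb => ?_
    have h1 := hTbound b (Finset.mem_union_left C hb)
    have h2 := hσbound b (Finset.mem_union_left C hb)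
    exact mul_pos (pow_pos (hGpos _ (by omega)) 2) (hGpos _ h2.1)
  have hprodCpos : 0 < ∏ c ∈ C, G c ^ 2 * G (m - sg c) := by
    refine Finset.prod_pos fun c hc => ?_
    have h1 := hTbound c (Finset.mem_union_right B hc)
    have h2 := hσbound c (Finset.mem_union_right B hc)
    exact mul_pos (pow_pos (hGpos _ h1.1) 2) (hGpos _ (by omega))
  have hErealpos : 0 < Ereal := by
    rw [hErealdef]
    have h1 : 1 ≤ m - p * r := by omega
    exact div_pos (mul_pos (mul_pos (pow_pos (Real.Gamma_pos_of_pos hxa_pos) 2)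
      (hGpos _ h1)) hprodBpos) hprodCpos
  refine ⟨0, (Ereal : ℂ), Complex.ofReal_ne_zero.mpr hErealpos.ne', ?_, ?_⟩
  · -- membership in ℚ(ζ_m)
    have hm0' : ((m:ℕ):ℂ) ≠ 0 := by exact_mod_cast hmpos.ne'
    set ζ : ℂ := Complex.exp (2 * (π:ℂ) * Complex.I / ((m:ℕ):ℂ)) with hζdef
    have hζm : ζ ^ m = 1 := by
      rw [hζdef, ← Complex.exp_nat_mul,
        show ((m:ℕ):ℂ) * (2 * (π:ℂ) * Complex.I / ((m:ℕ):ℂ)) = 2 * π * Complex.I by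
          field_simp]
      exact Complex.exp_two_pi_mul_I
    have hint : IsIntegral ℚ ζ := by
      refine ⟨Polynomial.X ^ m - Polynomial.C 1, Polynomial.monic_X_pow_sub_C 1 hmpos.ne', ?_⟩
      simp [hζm]
    rw [← IntermediateField.adjoin_simple_toSubalgebra_of_isAlgebraic hint.isAlgebraic,
      IntermediateField.mem_toSubalgebra]
    set η : ℂ := Complex.exp ((π:ℂ) * Complex.I / ((m:ℕ):ℂ)) with hηdef
    have hζmem : ζ ∈ (IntermediateField.adjoin ℚ {ζ}) := IntermediateField.mem_adjoin_simple_self ℚ ζ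
    have hmodd : Odd m := hodd.pow
    have hηmem : η ∈ (IntermediateField.adjoin ℚ {ζ}) := by
      have hq2 : 2 * ((m + 1) / 2) = m + 1 := by rcases hmodd with ⟨t, ht⟩; omega
      have hζq : ζ ^ ((m + 1) / 2) = -η := by
        rw [hζdef, hηdef, ← Complex.exp_nat_mul]
        have h2 : ((2 * ((m + 1) / 2) : ℕ) : ℂ) = ((m : ℕ) : ℂ) + 1 := by
          exact_mod_cast congrArg (Nat.cast : ℕ → ℂ) hq2
        push_cast at h2
        have harg : (((m + 1) / 2 : ℕ) : ℂ) * (2 * (π:ℂ) * Complex.I / ((m:ℕ):ℂ)) =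
            (π:ℂ) * Complex.I + (π:ℂ) * Complex.I / ((m:ℕ):ℂ) := by
          field_simp
          linear_combination h2
        rw [harg, Complex.exp_add, Complex.exp_pi_mul_I]
        ring
      have hη' : η = -ζ ^ ((m + 1) / 2) := by rw [hζq]; ring
      rw [hη']
      exact neg_mem (pow_mem hζmem _)
    have hηne : η ≠ 0 := Complex.exp_ne_zero _
    set u : ℕ → ℂ := fun t => (η ^ t)⁻¹ - η ^ t with hudef
    have humem : ∀ t : ℕ, u t ∈ (IntermediateField.adjoin ℚ {ζ}) := fun t =>
      sub_mem (inv_mem (pow_mem hηmem t)) (pow_mem hηmem t)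
    have hsinC : ∀ t : ℕ, ((S t : ℝ) : ℂ) = u t * Complex.I / 2 := by
      intro t
      rw [hSdef]
      simp only []
      rw [Complex.ofReal_sin]
      set z : ℂ := ((π * (t:ℝ) / (m:ℝ) : ℝ) : ℂ) with hzdef
      have hz1 : Complex.exp (z * Complex.I) = η ^ t := by
        rw [hηdef, ← Complex.exp_nat_mul]
        congr 1
        rw [hzdef]
        push_cast
        field_simp
      have hz2 : Complex.exp (-z * Complex.I) = (η ^ t)⁻¹ := by
        rw [show -z * Complex.I = -(z * Complex.I) by ring, Complex.exp_neg, hz1]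
      show (Complex.exp (-z * Complex.I) - Complex.exp (z * Complex.I)) * Complex.I / 2 = _
      rw [hz1, hz2, hudef]
    have hu0 : ∀ t : ℕ, 1 ≤ t → t ≤ m - 1 → u t ≠ 0 := by
      intro t h1 h2 h0
      have h3 := hsinC t
      rw [h0, zero_mul, zero_div] at h3
      exact (hSpos t h1 h2).ne' (by exact_mod_cast h3)
    have hzne : (Complex.I / 2 : ℂ) ≠ 0 := by
      simp [Complex.I_ne_zero]
    rw [hEkey]
    push_cast
    rw [hS0def, hS1def, hS2def, Complex.ofReal_prod, Complex.ofReal_prod, Complex.ofReal_prod]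
    simp only [hsinC]
    have hfac : ∀ (s : Finset ℕ) (f : ℕ → ℂ),
        ∏ x ∈ s, (f x * Complex.I / 2) = (∏ x ∈ s, f x) * (Complex.I / 2) ^ s.card := by
      intro s f
      rw [show (fun x => f x * Complex.I / 2) = fun x => f x * (Complex.I / 2) by
        funext x; ring]
      rw [Finset.prod_mul_distrib, Finset.prod_const]
    rw [hfac, hfac, hfac, hBq, hCq, Finset.card_range]
    have hX1ne : (∏ t ∈ B, u t) ≠ 0 := by
      rw [Finset.prod_ne_zero_iff]
      intro t ht
      exact hu0 t (hTbound t (Finset.mem_union_left C ht)).1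
        (hTbound t (Finset.mem_union_left C ht)).2
    have huvne : u (p * r) ≠ 0 := hu0 _ hprbound.1 hprbound.2
    have hEq : ((p:ℂ)) ^ ε / (p:ℂ) *
          (((∏ j ∈ Finset.range q, u ((j + 1) * μ)) * (Complex.I / 2) ^ q) *
            ((∏ t ∈ C, u (sg t)) * (Complex.I / 2) ^ (q + 1))) /
          ((u (p * r) * Complex.I / 2) * ((∏ t ∈ B, u t) * (Complex.I / 2) ^ q) ^ 2) =
        ((p:ℂ)) ^ ε / (p:ℂ) *
          ((∏ j ∈ Finset.range q, u ((j + 1) * μ)) * (∏ t ∈ C, u (sg t))) /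
          (u (p * r) * (∏ t ∈ B, u t) ^ 2) := by
      have hpC0 : ((p:ℕ):ℂ) ≠ 0 := by exact_mod_cast hppos.ne'
      field_simp [huvne, hX1ne, Complex.I_ne_zero, hpC0]
      ring
    rw [hEq]
    refine div_mem ?_ ?_
    · refine mul_mem (div_mem (pow_mem ?_ ε) ?_) (mul_mem (prod_mem fun j _ => humem _)
        (prod_mem fun t _ => humem _))
      · exact_mod_cast natCast_mem (IntermediateField.adjoin ℚ {ζ}) p
      · exact_mod_cast natCast_mem (IntermediateField.adjoin ℚ {ζ}) p
    · exact mul_mem (humem _) (pow_mem (prod_mem fun t _ => humem _) 2)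
  · -- the equation
    rw [zpow_zero, mul_one]
    have hcastG : ∀ t : ℕ, Complex.Gamma ((t:ℂ) / ((m:ℕ):ℂ)) = ((G t : ℝ) : ℂ) := by
      intro t
      rw [hGdef]
      rw [show ((t:ℂ) / ((m:ℕ):ℂ)) = (((t:ℝ) / (m:ℝ) : ℝ) : ℂ) by push_cast; rfl,
        Complex.Gamma_ofReal]
    have hGxa : ((Real.Gamma xa : ℝ) : ℂ) = ((G (p * a') : ℝ) : ℂ) := by
      rw [hxadef, hGdef]
    have eB : (∏ b ∈ B, Complex.Gamma (((m - b : ℕ):ℂ) / ((m:ℕ):ℂ)) ^ 2 *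
          Complex.Gamma ((repZ m (2 * (b:ℤ)) : ℂ) / ((m:ℕ):ℂ))) =
        ((∏ b ∈ B, G (m - b) ^ 2 * G (sg b) : ℝ) : ℂ) := by
      rw [Complex.ofReal_prod]
      refine Finset.prod_congr rfl fun b hb => ?_
      rw [hrepZ2 b, hcastG, hcastG]
      push_cast
      ring
    have eC : (∏ c ∈ C, Complex.Gamma ((c:ℂ) / ((m:ℕ):ℂ)) ^ 2 *
          Complex.Gamma ((repZ m (-2 * (c:ℤ)) : ℂ) / ((m:ℕ):ℂ))) =
        ((∏ c ∈ C, G c ^ 2 * G (m - sg c) : ℝ) : ℂ) := by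
      rw [Complex.ofReal_prod]
      refine Finset.prod_congr rfl fun c hc => ?_
      rw [hrepZneg c (Finset.mem_union_right B hc), hcastG, hcastG]
      push_cast
      ring
    rw [hrepZa, eB, eC, hcastG (m - p * r), hcastG (p * a')]
    rw [hErealdef]
    push_cast [hGxa]
    ring
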